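/- Let G₁ be a graph with distinguished distinct vertices u₁, v₁ and G₂ a graph with distinguished distinct vertices u₂, v₂, and let G be the graph obtained from the disjoint union of G₁ and G₂ by identifying u₁ with u₂ into a vertex u and identifying v₁ with v₂ into a vertex v. Then a set T ⊆ V(G) \ {u, v} is an inclusion-wise minimal u–v separator in G if and only if, for each i ∈ {1, 2}, the set T ∩ V(Gᵢ) is an inclusion-wise minimal uᵢ–vᵢ separator in Gᵢ. Consequently, mc_{u,v}(G) = mc_{u₁,v₁}(G₁)·mc_{u₂,v₂}(G₂). -/
import Mathlib


/-- `Separates G u v T` means every walk from `u` to `v` in `G` meets `T`;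
for `u, v ∉ T` this says `u` and `v` lie in different connected components of `G \ T`. -/
def Separates {V : Type*} (G : SimpleGraph V) (u v : V) (T : Set V) : Prop :=
  ∀ p : G.Walk u v, ∃ x ∈ p.support, x ∈ T

/-- `T` is an inclusion-wise minimal `u`–`v` separator in `G`:
`T ⊆ V(G) \ {u, v}`, removing `T` puts `u` and `v` in different connected components,
and removing any proper subset `T' ⊊ T` leaves `u` and `v` in the same component. -/
def IsMinSeparator {V : Type*} (G : SimpleGraph V) (u v : V) (T : Set V) : Prop :=
  u ∉ T ∧ v ∉ T ∧ Separates G u v T ∧ ∀ T' ⊂ T, ¬ Separates G u v T'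

/-- `mc G u v` is the number of inclusion-wise minimal `u`–`v` separators in `G`. -/
noncomputable def mc {V : Type*} (G : SimpleGraph V) (u v : V) : ℕ :=
  {T : Set V | IsMinSeparator G u v T}.ncard

/-- `g n` is the maximum of `mc G u v` over graphs `G` on `n + 2` vertices and
pairs of distinct vertices `u ≠ v`. -/
noncomputable def g (n : ℕ) : ℕ :=
  sSup {k | ∃ (G : SimpleGraph (Fin (n + 2))) (u v : Fin (n + 2)), u ≠ v ∧ mc G u v = k}

/-- `T` is a vertex cut of `G`: removing `T` disconnects `G`, i.e. some two remaining
vertices lie in different connected components of `G \ T`. -/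
def IsCutSet {V : Type*} (G : SimpleGraph V) (T : Set V) : Prop :=
  ∃ u v, u ∉ T ∧ v ∉ T ∧ Separates G u v T

/-- `T` is an inclusion-wise minimal vertex cut of `G`. -/
def IsMinCutSet {V : Type*} (G : SimpleGraph V) (T : Set V) : Prop :=
  IsCutSet G T ∧ ∀ T' ⊂ T, ¬ IsCutSet G T'

/-- `c n` is the maximum number of inclusion-wise minimal vertex cuts of a graph
on `n` vertices. -/
noncomputable def c (n : ℕ) : ℕ :=
  sSup {k | ∃ G : SimpleGraph (Fin n), {T : Set (Fin n) | IsMinCutSet G T}.ncard = k}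

/-- The binary entropy function `H(x) = -x log₂ x - (1 - x) log₂ (1 - x)`. -/
noncomputable def binH (x : ℝ) : ℝ :=
  -x * Real.logb 2 x - (1 - x) * Real.logb 2 (1 - x)

/-- The outer neighbourhood of `X` in `G`: all vertices outside `X` having a
neighbour in `X`. -/
def outNbhd {V : Type*} (G : SimpleGraph V) (X : Set V) : Set V :=
  {y | y ∉ X ∧ ∃ x ∈ X, G.Adj x y}

/-- The vertex set of the connected component of `u` in `G \ T`: all vertices
reachable from `u` by a walk avoiding `T`. -/
def compOf {V : Type*} (G : SimpleGraph V) (T : Set V) (u : V) : Set V :=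
  {x | ∃ p : G.Walk u x, ∀ y ∈ p.support, y ∉ T}

open Function Set

lemma lift_aux {V₁ V : Type*} (G₁ : SimpleGraph V₁) (G : SimpleGraph V)
    (f₁ : V₁ → V) (hf₁ : Function.Injective f₁) (u v : V) (v₁ : V₁) (hv₁ : f₁ v₁ = v)
    (hsep : ∀ x y : V, G.Adj x y → x ∈ Set.range f₁ → x ∉ ({u, v} : Set V) →
      ∃ a b : V₁, G₁.Adj a b ∧ f₁ a = x ∧ f₁ b = y) :
    ∀ {w c : V} (t : G.Walk w c) (x : V₁), f₁ x = w → c = v → w ∉ ({u, v} : Set V) →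
      (∀ z ∈ t.support, z ≠ v → z ∉ ({u, v} : Set V)) →
      ∃ q : G₁.Walk x v₁, ∀ z ∈ q.support, f₁ z ∈ t.support := by
  intro w c t
  induction t with
  | nil =>
    intro x hfx hc hw _
    exact absurd (by simp [hc] : _ ∈ ({u, v} : Set V)) hw
  | @cons w w₂ c h t₂ ih =>
    intro x hfx hc hw hcond
    obtain ⟨a, b, hab, hfa, hfb⟩ := hsep w w₂ h ⟨x, hfx⟩ hw
    have hax : a = x := hf₁ (by rw [hfa, hfx])
    subst hax
    by_cases hw₂ : w₂ = v
    · have hbv : b = v₁ := hf₁ (by rw [hfb, hw₂, hv₁])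
      subst hbv
      refine ⟨SimpleGraph.Walk.cons hab SimpleGraph.Walk.nil, ?_⟩
      intro z hz
      simp only [SimpleGraph.Walk.support_cons, SimpleGraph.Walk.support_nil,
        List.mem_cons, List.mem_singleton] at hz
      rcases hz with rfl | rfl | h'
      · simp [hfx]
      · simp [hfb]
      · cases h'
    · have hw₂mem : w₂ ∉ ({u, v} : Set V) := hcond w₂ (by simp) hw₂
      obtain ⟨q₂, hq₂⟩ := ih b hfb hc hw₂mem (fun z hz hzv => hcond z (by simp [hz]) hzv)
      refine ⟨SimpleGraph.Walk.cons hab q₂, ?_⟩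
      intro z hz
      simp only [SimpleGraph.Walk.support_cons, List.mem_cons] at hz
      rcases hz with rfl | hz
      · simp [hfx]
      · simp [hq₂ z hz]

lemma side_walk {V₁ V : Type*} (G₁ : SimpleGraph V₁) (G : SimpleGraph V)
    (f₁ : V₁ → V) (hf₁ : Function.Injective f₁) (u v : V) (u₁ v₁ : V₁)
    (hu₁ : f₁ u₁ = u) (hv₁ : f₁ v₁ = v)
    (hsep : ∀ x y : V, G.Adj x y → x ∈ Set.range f₁ → x ∉ ({u, v} : Set V) →
      ∃ a b : V₁, G₁.Adj a b ∧ f₁ a = x ∧ f₁ b = y)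
    {w : V} (t : G.Walk w v)
    (hw : w ∉ ({u, v} : Set V))
    (hcond : ∀ z ∈ t.support, z ≠ v → z ∉ ({u, v} : Set V))
    (hedge : ∃ a b : V₁, G₁.Adj a b ∧ f₁ a = u ∧ f₁ b = w) :
    ∃ q : G₁.Walk u₁ v₁, ∀ z ∈ q.support, f₁ z = u ∨ f₁ z ∈ t.support := by
  obtain ⟨a, b, hab, ha, hb⟩ := hedge
  have hau : a = u₁ := hf₁ (by rw [ha, hu₁])
  subst hau
  obtain ⟨q₂, hq₂⟩ := lift_aux G₁ G f₁ hf₁ u v v₁ hv₁ hsep t b hb rfl hw hcond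
  refine ⟨SimpleGraph.Walk.cons hab q₂, ?_⟩
  intro z hz
  simp only [SimpleGraph.Walk.support_cons, List.mem_cons] at hz
  rcases hz with rfl | hz
  · exact Or.inl hu₁
  · exact Or.inr (hq₂ z hz)

-- forward: mapping walks of G₁ into G
lemma fwd_sep {V₁ V : Type*} {G₁ : SimpleGraph V₁} {G : SimpleGraph V}
    {f₁ : V₁ → V} {u v : V} {u₁ v₁ : V₁} (hu₁ : f₁ u₁ = u) (hv₁ : f₁ v₁ = v)
    (hmap : ∀ a b : V₁, G₁.Adj a b → G.Adj (f₁ a) (f₁ b))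
    (T : Set V) (hT : ∀ p : G.Walk u v, ∃ x ∈ p.support, x ∈ T) :
    ∀ q : G₁.Walk u₁ v₁, ∃ x ∈ q.support, x ∈ f₁ ⁻¹' T := by
  intro q
  let φ : G₁ →g G := ⟨f₁, fun h => hmap _ _ h⟩
  obtain ⟨x, hx, hxT⟩ := hT (((q.map φ).copy hu₁ hv₁))
  rw [SimpleGraph.Walk.support_copy, SimpleGraph.Walk.support_map] at hx
  obtain ⟨y, hy, rfl⟩ := List.mem_map.mp hx
  exact ⟨y, hy, hxT⟩

/-- Gluing: if `G` is obtained from the disjoint union of `G₁` and `G₂` by identifying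
`u₁` with `u₂` into `u` and `v₁` with `v₂` into `v` (expressed via injections
`f₁ : V₁ → V`, `f₂ : V₂ → V` whose ranges cover `V` and meet exactly in `{u, v}`,
with adjacency in `G` induced exactly from `G₁` and `G₂`), then `T` is a minimal
`u`–`v` separator of `G` iff its trace on each `Gᵢ` is a minimal `uᵢ`–`vᵢ` separator,
and consequently `mc G u v = mc G₁ u₁ v₁ * mc G₂ u₂ v₂`. -/
theorem glued_min_separators {V₁ V₂ V : Type*} [Fintype V₁] [Fintype V₂] [Fintype V]
    (G₁ : SimpleGraph V₁) (G₂ : SimpleGraph V₂) (G : SimpleGraph V)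
    (u₁ v₁ : V₁) (u₂ v₂ : V₂) (u v : V)
    (hu₁v₁ : u₁ ≠ v₁) (hu₂v₂ : u₂ ≠ v₂)
    (f₁ : V₁ → V) (f₂ : V₂ → V)
    (hf₁ : Function.Injective f₁) (hf₂ : Function.Injective f₂)
    (hcover : Set.range f₁ ∪ Set.range f₂ = Set.univ)
    (hinter : Set.range f₁ ∩ Set.range f₂ = {u, v})
    (hu₁ : f₁ u₁ = u) (hu₂ : f₂ u₂ = u) (hv₁ : f₁ v₁ = v) (hv₂ : f₂ v₂ = v)
    (hadj : ∀ x y : V, G.Adj x y ↔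
      (∃ a b : V₁, G₁.Adj a b ∧ f₁ a = x ∧ f₁ b = y) ∨
      (∃ a b : V₂, G₂.Adj a b ∧ f₂ a = x ∧ f₂ b = y)) :
    (∀ T : Set V, u ∉ T → v ∉ T →
      (IsMinSeparator G u v T ↔
        IsMinSeparator G₁ u₁ v₁ (f₁ ⁻¹' T) ∧ IsMinSeparator G₂ u₂ v₂ (f₂ ⁻¹' T))) ∧
    mc G u v = mc G₁ u₁ v₁ * mc G₂ u₂ v₂ := by
  classical
  have huv : u ≠ v := fun h => hu₁v₁ (hf₁ (by rw [hu₁, hv₁, h]))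
  have hmap₁ : ∀ a b : V₁, G₁.Adj a b → G.Adj (f₁ a) (f₁ b) :=
    fun a b h => (hadj _ _).mpr (Or.inl ⟨a, b, h, rfl, rfl⟩)
  have hmap₂ : ∀ a b : V₂, G₂.Adj a b → G.Adj (f₂ a) (f₂ b) :=
    fun a b h => (hadj _ _).mpr (Or.inr ⟨a, b, h, rfl, rfl⟩)
  have hsep₁ : ∀ x y : V, G.Adj x y → x ∈ Set.range f₁ → x ∉ ({u, v} : Set V) →
      ∃ a b : V₁, G₁.Adj a b ∧ f₁ a = x ∧ f₁ b = y := by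
    intro x y hxy hx hxm
    rcases (hadj x y).mp hxy with h | ⟨a, b, _, ha, _⟩
    · exact h
    · exact absurd (hinter ▸ (⟨hx, ⟨a, ha⟩⟩ : x ∈ Set.range f₁ ∩ Set.range f₂)) hxm
  have hsep₂ : ∀ x y : V, G.Adj x y → x ∈ Set.range f₂ → x ∉ ({u, v} : Set V) →
      ∃ a b : V₂, G₂.Adj a b ∧ f₂ a = x ∧ f₂ b = y := by
    intro x y hxy hx hxm
    rcases (hadj x y).mp hxy with ⟨a, b, _, ha, _⟩ | h
    · exact absurd (hinter ▸ (⟨⟨a, ha⟩, hx⟩ : x ∈ Set.range f₁ ∩ Set.range f₂)) hxm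
    · exact h
  -- the key equivalence for Separates
  have hA : ∀ T : Set V, Separates G u v T ↔
      (Separates G₁ u₁ v₁ (f₁ ⁻¹' T) ∧ Separates G₂ u₂ v₂ (f₂ ⁻¹' T)) := by
    intro T
    constructor
    · intro h
      exact ⟨fwd_sep hu₁ hv₁ hmap₁ T h, fwd_sep hu₂ hv₂ hmap₂ T h⟩
    · rintro ⟨h1, h2⟩ p
      by_contra hcon
      push_neg at hcon
      have hc : ∀ x ∈ p.support, x ∉ T := fun x hx hxT => (hcon x hx) hxT
      have hvmem : v ∈ p.support := p.end_mem_support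
      have hex : ∃ r : G.Walk u v, (∀ z ∈ r.support, z ∈ p.support) ∧
          r.support.count u = 1 := by
        have humem : u ∈ (p.takeUntil v hvmem).reverse.support := by
          rw [SimpleGraph.Walk.support_reverse, List.mem_reverse]
          exact (p.takeUntil v hvmem).start_mem_support
        refine ⟨((p.takeUntil v hvmem).reverse.takeUntil u humem).reverse, ?_, ?_⟩
        · intro z hz
          rw [SimpleGraph.Walk.support_reverse, List.mem_reverse] at hz
          have h2 := SimpleGraph.Walk.support_takeUntil_subset _ humem hz
          rw [SimpleGraph.Walk.support_reverse, List.mem_reverse] at h2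
          exact SimpleGraph.Walk.support_takeUntil_subset _ hvmem h2
        · rw [SimpleGraph.Walk.support_reverse, List.count_reverse]
          exact SimpleGraph.Walk.count_support_takeUntil_eq_one _ humem
      obtain ⟨r, hrsub, hcount⟩ := hex
      cases r with
      | nil => exact huv rfl
      | @cons _ w _ h t =>
        have hu_not : u ∉ t.support := by
          intro hm
          rw [SimpleGraph.Walk.support_cons] at hcount
          have h1' : 1 ≤ t.support.count u := List.count_pos_iff.mpr hm
          simp [List.count_cons] at hcount
          omega
        have hcondt : ∀ z ∈ t.support, z ≠ v → z ∉ ({u, v} : Set V) := by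
          intro z hz hzv hmem
          simp only [Set.mem_insert_iff, Set.mem_singleton_iff] at hmem
          rcases hmem with rfl | rfl
          · exact hu_not hz
          · exact hzv rfl
        have hrsub' : ∀ z ∈ t.support, z ∈ p.support := fun z hz =>
          hrsub z (by rw [SimpleGraph.Walk.support_cons]; exact List.mem_cons_of_mem _ hz)
        by_cases hwv : w = v
        · rw [hwv] at h
          rcases (hadj u v).mp h with ⟨a, b, hab, ha, hb⟩ | ⟨a, b, hab, ha, hb⟩
          · have ha' : a = u₁ := hf₁ (by rw [ha, hu₁])
            have hb' : b = v₁ := hf₁ (by rw [hb, hv₁])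
            rw [ha', hb'] at hab
            obtain ⟨z, hz, hzT⟩ := h1 (SimpleGraph.Walk.cons hab SimpleGraph.Walk.nil)
            simp only [SimpleGraph.Walk.support_cons, SimpleGraph.Walk.support_nil,
              List.mem_cons, List.mem_singleton, List.not_mem_nil, or_false] at hz
            rcases hz with rfl | rfl
            · exact hc u p.start_mem_support (by simpa [Set.mem_preimage, hu₁] using hzT)
            · exact hc v hvmem (by simpa [Set.mem_preimage, hv₁] using hzT)
          · have ha' : a = u₂ := hf₂ (by rw [ha, hu₂])
            have hb' : b = v₂ := hf₂ (by rw [hb, hv₂])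
            rw [ha', hb'] at hab
            obtain ⟨z, hz, hzT⟩ := h2 (SimpleGraph.Walk.cons hab SimpleGraph.Walk.nil)
            simp only [SimpleGraph.Walk.support_cons, SimpleGraph.Walk.support_nil,
              List.mem_cons, List.mem_singleton, List.not_mem_nil, or_false] at hz
            rcases hz with rfl | rfl
            · exact hc u p.start_mem_support (by simpa [Set.mem_preimage, hu₂] using hzT)
            · exact hc v hvmem (by simpa [Set.mem_preimage, hv₂] using hzT)
        · have hwu : w ≠ u := fun hh => hu_not (hh ▸ t.start_mem_support)
          have hwm : w ∉ ({u, v} : Set V) := by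
            intro hmem
            simp only [Set.mem_insert_iff, Set.mem_singleton_iff] at hmem
            rcases hmem with rfl | rfl
            · exact hwu rfl
            · exact hwv rfl
          have hwin : w ∈ Set.range f₁ ∪ Set.range f₂ := by rw [hcover]; trivial
          rcases hwin with ⟨x, hx⟩ | ⟨x, hx⟩
          · have hedge : ∃ a b : V₁, G₁.Adj a b ∧ f₁ a = u ∧ f₁ b = w := by
              rcases (hadj u w).mp h with h' | ⟨a, b, _, _, hb⟩
              · exact h'
              · exact absurd (hinter ▸ (⟨⟨x, hx⟩, ⟨b, hb⟩⟩ :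
                  w ∈ Set.range f₁ ∩ Set.range f₂)) hwm
            obtain ⟨q', hq'⟩ := side_walk G₁ G f₁ hf₁ u v u₁ v₁ hu₁ hv₁ hsep₁ t hwm hcondt hedge
            obtain ⟨z, hz, hzT⟩ := h1 q'
            rcases hq' z hz with hzu | hzs
            · exact hc u p.start_mem_support (hzu ▸ hzT)
            · exact hc (f₁ z) (hrsub' _ hzs) hzT
          · have hedge : ∃ a b : V₂, G₂.Adj a b ∧ f₂ a = u ∧ f₂ b = w := by
              rcases (hadj u w).mp h with ⟨a, b, _, _, hb⟩ | h'
              · exact absurd (hinter ▸ (⟨⟨b, hb⟩, ⟨x, hx⟩⟩ :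
                  w ∈ Set.range f₁ ∩ Set.range f₂)) hwm
              · exact h'
            obtain ⟨q', hq'⟩ := side_walk G₂ G f₂ hf₂ u v u₂ v₂ hu₂ hv₂ hsep₂ t hwm hcondt hedge
            obtain ⟨z, hz, hzT⟩ := h2 q'
            rcases hq' z hz with hzu | hzs
            · exact hc u p.start_mem_support (hzu ▸ hzT)
            · exact hc (f₂ z) (hrsub' _ hzs) hzT
  -- the min-separator iff
  have hmain : ∀ T : Set V, u ∉ T → v ∉ T →
      (IsMinSeparator G u v T ↔
        IsMinSeparator G₁ u₁ v₁ (f₁ ⁻¹' T) ∧ IsMinSeparator G₂ u₂ v₂ (f₂ ⁻¹' T)) := by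
    intro T huT hvT
    constructor
    · rintro ⟨-, -, hs, hmin⟩
      obtain ⟨h1, h2⟩ := (hA T).mp hs
      refine ⟨⟨by simpa [Set.mem_preimage, hu₁] using huT,
        by simpa [Set.mem_preimage, hv₁] using hvT, h1, ?_⟩,
        ⟨by simpa [Set.mem_preimage, hu₂] using huT,
        by simpa [Set.mem_preimage, hv₂] using hvT, h2, ?_⟩⟩
      · intro T₁' hsub hsep'
        have hps : (T \ (f₁ '' ((f₁ ⁻¹' T) \ T₁'))) ⊂ T := by
          refine ⟨Set.diff_subset, fun hsup => ?_⟩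
          obtain ⟨a, haT, haT'⟩ := Set.exists_of_ssubset hsub
          exact (hsup haT).2 ⟨a, ⟨haT, haT'⟩, rfl⟩
        refine hmin _ hps ((hA _).mpr ⟨?_, ?_⟩)
        · have he : f₁ ⁻¹' (T \ (f₁ '' ((f₁ ⁻¹' T) \ T₁'))) = T₁' := by
            ext z
            simp only [Set.mem_preimage, Set.mem_diff, Set.mem_image]
            constructor
            · rintro ⟨hzT, hno⟩
              by_contra hzn
              exact hno ⟨z, ⟨hzT, hzn⟩, rfl⟩
            · intro hz
              refine ⟨hsub.subset hz, ?_⟩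
              rintro ⟨a, ⟨haT, han⟩, hfa⟩
              exact han (hf₁ hfa ▸ hz)
          rw [he]; exact hsep'
        · have he : f₂ ⁻¹' (T \ (f₁ '' ((f₁ ⁻¹' T) \ T₁'))) = f₂ ⁻¹' T := by
            ext z
            simp only [Set.mem_preimage, Set.mem_diff]
            constructor
            · exact fun h => h.1
            · intro hzT
              refine ⟨hzT, ?_⟩
              rintro ⟨a, ⟨haT, -⟩, hfa⟩
              have hm : f₂ z ∈ Set.range f₁ ∩ Set.range f₂ := ⟨⟨a, hfa⟩, ⟨z, rfl⟩⟩
              rw [hinter] at hm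
              simp only [Set.mem_insert_iff, Set.mem_singleton_iff] at hm
              rcases hm with hm | hm
              · exact huT (hm ▸ hzT)
              · exact hvT (hm ▸ hzT)
          rw [he]; exact h2
      · intro T₂' hsub hsep'
        have hps : (T \ (f₂ '' ((f₂ ⁻¹' T) \ T₂'))) ⊂ T := by
          refine ⟨Set.diff_subset, fun hsup => ?_⟩
          obtain ⟨a, haT, haT'⟩ := Set.exists_of_ssubset hsub
          exact (hsup haT).2 ⟨a, ⟨haT, haT'⟩, rfl⟩
        refine hmin _ hps ((hA _).mpr ⟨?_, ?_⟩)
        · have he : f₁ ⁻¹' (T \ (f₂ '' ((f₂ ⁻¹' T) \ T₂'))) = f₁ ⁻¹' T := by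
            ext z
            simp only [Set.mem_preimage, Set.mem_diff]
            constructor
            · exact fun h => h.1
            · intro hzT
              refine ⟨hzT, ?_⟩
              rintro ⟨a, ⟨haT, -⟩, hfa⟩
              have hm : f₁ z ∈ Set.range f₁ ∩ Set.range f₂ := ⟨⟨z, rfl⟩, ⟨a, hfa⟩⟩
              rw [hinter] at hm
              simp only [Set.mem_insert_iff, Set.mem_singleton_iff] at hm
              rcases hm with hm | hm
              · exact huT (hm ▸ hzT)
              · exact hvT (hm ▸ hzT)
          rw [he]; exact h1
        · have he : f₂ ⁻¹' (T \ (f₂ '' ((f₂ ⁻¹' T) \ T₂'))) = T₂' := by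
            ext z
            simp only [Set.mem_preimage, Set.mem_diff, Set.mem_image]
            constructor
            · rintro ⟨hzT, hno⟩
              by_contra hzn
              exact hno ⟨z, ⟨hzT, hzn⟩, rfl⟩
            · intro hz
              refine ⟨hsub.subset hz, ?_⟩
              rintro ⟨a, ⟨haT, han⟩, hfa⟩
              exact han (hf₂ hfa ▸ hz)
          rw [he]; exact hsep'
    · rintro ⟨⟨hu1, hv1, h1, hmin1⟩, ⟨hu2, hv2, h2, hmin2⟩⟩
      refine ⟨huT, hvT, (hA T).mpr ⟨h1, h2⟩, ?_⟩
      intro T' hT' hsepT'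
      obtain ⟨h1', h2'⟩ := (hA T').mp hsepT'
      obtain ⟨x, hxT, hxT'⟩ := Set.exists_of_ssubset hT'
      have hx : x ∈ Set.range f₁ ∪ Set.range f₂ := by rw [hcover]; trivial
      rcases hx with ⟨a, rfl⟩ | ⟨a, rfl⟩
      · exact hmin1 (f₁ ⁻¹' T')
          ⟨Set.preimage_mono hT'.subset, fun hsup => hxT' (hsup hxT)⟩ h1'
      · exact hmin2 (f₂ ⁻¹' T')
          ⟨Set.preimage_mono hT'.subset, fun hsup => hxT' (hsup hxT)⟩ h2'
  refine ⟨hmain, ?_⟩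
  -- counting
  have hrep : ∀ T : Set V, f₁ '' (f₁ ⁻¹' T) ∪ f₂ '' (f₂ ⁻¹' T) = T := by
    intro T
    apply Set.Subset.antisymm
    · exact Set.union_subset (Set.image_preimage_subset _ _) (Set.image_preimage_subset _ _)
    · intro x hxT
      have hx : x ∈ Set.range f₁ ∪ Set.range f₂ := by rw [hcover]; trivial
      rcases hx with ⟨a, rfl⟩ | ⟨a, rfl⟩
      · exact Or.inl ⟨a, hxT, rfl⟩
      · exact Or.inr ⟨a, hxT, rfl⟩
  have hinjF : Set.InjOn (fun T : Set V => ((f₁ ⁻¹' T, f₂ ⁻¹' T) : Set V₁ × Set V₂))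
      {T : Set V | IsMinSeparator G u v T} := by
    intro T _ T' _ hFF
    have e1 : f₁ ⁻¹' T = f₁ ⁻¹' T' := congrArg Prod.fst hFF
    have e2 : f₂ ⁻¹' T = f₂ ⁻¹' T' := congrArg Prod.snd hFF
    rw [← hrep T, ← hrep T', e1, e2]
  have himg : (fun T : Set V => ((f₁ ⁻¹' T, f₂ ⁻¹' T) : Set V₁ × Set V₂)) ''
      {T : Set V | IsMinSeparator G u v T} =
      {T : Set V₁ | IsMinSeparator G₁ u₁ v₁ T} ×ˢ {T : Set V₂ | IsMinSeparator G₂ u₂ v₂ T} := by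
    apply Set.Subset.antisymm
    · rintro _ ⟨T, hT, rfl⟩
      have hT' : IsMinSeparator G u v T := hT
      have hm := (hmain T hT'.1 hT'.2.1).mp hT'
      exact Set.mk_mem_prod hm.1 hm.2
    · rintro ⟨T₁, T₂⟩ hmem
      rw [Set.mem_prod] at hmem
      obtain ⟨hT₁, hT₂⟩ := hmem
      have hT₁' : IsMinSeparator G₁ u₁ v₁ T₁ := hT₁
      have hT₂' : IsMinSeparator G₂ u₂ v₂ T₂ := hT₂
      have hpre₁ : f₁ ⁻¹' (f₁ '' T₁ ∪ f₂ '' T₂) = T₁ := by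
        apply Set.Subset.antisymm
        · intro z hz
          rcases hz with hz | hz
          · obtain ⟨a, ha, hfa⟩ := hz
            exact hf₁ hfa ▸ ha
          · obtain ⟨a, haT₂, hfa⟩ := hz
            have hm : f₁ z ∈ Set.range f₁ ∩ Set.range f₂ := ⟨⟨z, rfl⟩, ⟨a, hfa⟩⟩
            rw [hinter] at hm
            simp only [Set.mem_insert_iff, Set.mem_singleton_iff] at hm
            rcases hm with hm | hm
            · exact absurd (hf₂ (hfa.trans (hm.trans hu₂.symm)) ▸ haT₂) hT₂'.1
            · exact absurd (hf₂ (hfa.trans (hm.trans hv₂.symm)) ▸ haT₂) hT₂'.2.1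
        · intro z hz
          exact Or.inl ⟨z, hz, rfl⟩
      have hpre₂ : f₂ ⁻¹' (f₁ '' T₁ ∪ f₂ '' T₂) = T₂ := by
        apply Set.Subset.antisymm
        · intro z hz
          rcases hz with hz | hz
          · obtain ⟨a, haT₁, hfa⟩ := hz
            have hm : f₂ z ∈ Set.range f₁ ∩ Set.range f₂ := ⟨⟨a, hfa⟩, ⟨z, rfl⟩⟩
            rw [hinter] at hm
            simp only [Set.mem_insert_iff, Set.mem_singleton_iff] at hm
            rcases hm with hm | hm
            · exact absurd (hf₁ (hfa.trans (hm.trans hu₁.symm)) ▸ haT₁) hT₁'.1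
            · exact absurd (hf₁ (hfa.trans (hm.trans hv₁.symm)) ▸ haT₁) hT₁'.2.1
          · obtain ⟨a', ha', hfa'⟩ := hz
            exact hf₂ hfa' ▸ ha'
        · intro z hz
          exact Or.inr ⟨z, hz, rfl⟩
      have huT : u ∉ f₁ '' T₁ ∪ f₂ '' T₂ := by
        rintro (⟨a, haT, hfa⟩ | ⟨a, haT, hfa⟩)
        · exact hT₁'.1 (hf₁ (hfa.trans hu₁.symm) ▸ haT)
        · exact hT₂'.1 (hf₂ (hfa.trans hu₂.symm) ▸ haT)
      have hvT : v ∉ f₁ '' T₁ ∪ f₂ '' T₂ := by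
        rintro (⟨a, haT, hfa⟩ | ⟨a, haT, hfa⟩)
        · exact hT₁'.2.1 (hf₁ (hfa.trans hv₁.symm) ▸ haT)
        · exact hT₂'.2.1 (hf₂ (hfa.trans hv₂.symm) ▸ haT)
      have hTS : IsMinSeparator G u v (f₁ '' T₁ ∪ f₂ '' T₂) :=
        (hmain _ huT hvT).mpr ⟨hpre₁.symm ▸ hT₁', hpre₂.symm ▸ hT₂'⟩
      exact ⟨f₁ '' T₁ ∪ f₂ '' T₂, hTS, by simp only [hpre₁, hpre₂]⟩
  have hcalc : mc G u v = mc G₁ u₁ v₁ * mc G₂ u₂ v₂ := by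
    rw [mc, mc, mc, ← Set.ncard_image_of_injOn hinjF, himg,
      ← Nat.card_coe_set_eq, ← Nat.card_coe_set_eq, ← Nat.card_coe_set_eq,
      Nat.card_congr (Equiv.Set.prod _ _), Nat.card_prod]
  exact hcalc
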